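/- arXiv:1808.05840 — 2 statements merged into one kernel-verified Lean document; each statement's English description precedes it below -/
import Mathlib

section
/- Let α ≥ 2 be a real number, let ε₁ and ε₂ be real numbers with 0 < ε₁ ≤ 1 ≤ ε₂, and let T' : ℕ → ℝ satisfy ε₁·n^α ≤ T'(n) ≤ ε₂·n^α for every natural number n ≥ 1. Fix natural numbers m and n₀, set n = 2^(2^(m+n₀)) and p = ⌊(log₂ (T'(n)) − log₂ ε₁)/2^(n₀)⌋. Then ⌊α·2^m⌋ ≤ p and (p : ℝ) ≤ α·2^m + log₂(ε₂/ε₁)/2^(n₀). -/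
theorem stmt_1 (α : ℝ) (hα : 2 ≤ α) (ε₁ ε₂ : ℝ) (hε₁ : 0 < ε₁) (hε₁1 : ε₁ ≤ 1)
    (hε₂ : 1 ≤ ε₂) (T' : ℕ → ℝ)
    (hT : ∀ n : ℕ, 1 ≤ n → ε₁ * (n : ℝ) ^ α ≤ T' n ∧ T' n ≤ ε₂ * (n : ℝ) ^ α)
    (m n₀ : ℕ) (n : ℕ) (hn : n = 2 ^ (2 ^ (m + n₀)))
    (p : ℤ) (hp : p = ⌊(Real.logb 2 (T' n) - Real.logb 2 ε₁) / 2 ^ n₀⌋) :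
    ⌊α * 2 ^ m⌋ ≤ p ∧ (p : ℝ) ≤ α * 2 ^ m + Real.logb 2 (ε₂ / ε₁) / 2 ^ n₀ := by
  have hn1 : 1 ≤ n := by rw [hn]; exact Nat.one_le_two_pow
  obtain ⟨hL, hU⟩ := hT n hn1
  have hnpos : (0:ℝ) < (n : ℝ) ^ α := by
    apply Real.rpow_pos_of_pos
    exact_mod_cast Nat.lt_of_lt_of_le Nat.zero_lt_one hn1
  have hxpos : 0 < T' n := lt_of_lt_of_le (by positivity) hL
  have hcast : ((n : ℝ)) = (2:ℝ) ^ (2 ^ (m + n₀) : ℕ) := by rw [hn]; push_cast; ring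
  have hlogn : Real.logb 2 ((n : ℝ) ^ α) = α * 2 ^ m * 2 ^ n₀ := by
    rw [hcast, ← Real.rpow_natCast (2:ℝ), ← Real.rpow_mul (by norm_num),
      Real.logb_rpow (by norm_num) (by norm_num)]
    push_cast
    rw [pow_add]
    ring
  have h2pos : (0:ℝ) < 2 ^ n₀ := by positivity
  set c := Real.logb 2 (T' n) - Real.logb 2 ε₁ with hc
  have hlow : α * 2 ^ m * 2 ^ n₀ ≤ c := by
    have h1 : Real.logb 2 (ε₁ * (n : ℝ) ^ α) ≤ Real.logb 2 (T' n) :=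
      Real.logb_le_logb_of_le (by norm_num) (by positivity) hL
    rw [Real.logb_mul (ne_of_gt hε₁) (ne_of_gt hnpos), hlogn] at h1
    linarith
  have hhigh : c ≤ α * 2 ^ m * 2 ^ n₀ + Real.logb 2 (ε₂ / ε₁) := by
    have h1 : Real.logb 2 (T' n) ≤ Real.logb 2 (ε₂ * (n : ℝ) ^ α) :=
      Real.logb_le_logb_of_le (by norm_num) hxpos hU
    rw [Real.logb_mul (by linarith) (ne_of_gt hnpos), hlogn] at h1
    rw [Real.logb_div (by linarith) (ne_of_gt hε₁)]
    linarith
  constructor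
  · rw [hp]
    apply Int.floor_le_floor
    rw [le_div_iff₀ h2pos]
    exact hlow
  · rw [hp]
    calc ((⌊c / 2 ^ n₀⌋ : ℤ) : ℝ) ≤ c / 2 ^ n₀ := Int.floor_le _
      _ ≤ α * 2 ^ m + Real.logb 2 (ε₂ / ε₁) / 2 ^ n₀ := by
          rw [div_le_iff₀ h2pos, add_mul, div_mul_cancel₀ _ (ne_of_gt h2pos)]; exact hhigh
end

section
/- Let α ≥ 2 be a real number, let ε₁ and ε₂ be real numbers with 0 < ε₁ ≤ 1 ≤ ε₂, and let T' : ℕ → ℝ satisfy ε₁·n^α ≤ T'(n) ≤ ε₂·n^α for every natural number n ≥ 1. Fix natural numbers m and n₀ such that 2^(n₀) > log₂(ε₂/ε₁). Set n = 2^(2^(m+n₀)) and p = ⌊(log₂ (T'(n)) − log₂ ε₁)/2^(n₀)⌋. Then |(p : ℝ)/2^m − α| < 1/2^m; that is, the binary rational p/2^m approximates α with error less than 1/2^m. -/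
theorem stmt_2 (α : ℝ) (hα : 2 ≤ α) (ε₁ ε₂ : ℝ) (hε₁ : 0 < ε₁) (hε₁1 : ε₁ ≤ 1)
    (hε₂ : 1 ≤ ε₂) (T' : ℕ → ℝ)
    (hT : ∀ n : ℕ, 1 ≤ n → ε₁ * (n : ℝ) ^ α ≤ T' n ∧ T' n ≤ ε₂ * (n : ℝ) ^ α)
    (m n₀ : ℕ) (hn₀ : Real.logb 2 (ε₂ / ε₁) < 2 ^ n₀)
    (n : ℕ) (hn : n = 2 ^ (2 ^ (m + n₀)))
    (p : ℤ) (hp : p = ⌊(Real.logb 2 (T' n) - Real.logb 2 ε₁) / 2 ^ n₀⌋) :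
    |(p : ℝ) / 2 ^ m - α| < 1 / 2 ^ m := by
  have hn1 : 1 ≤ n := by rw [hn]; exact Nat.one_le_two_pow
  have hNpos : (0 : ℝ) < (n : ℝ) := by exact_mod_cast Nat.pos_of_ne_zero (by omega)
  obtain ⟨h1, h2⟩ := hT n hn1
  have hpow : (0 : ℝ) < (n : ℝ) ^ α := Real.rpow_pos_of_pos hNpos α
  have hTpos : 0 < T' n := lt_of_lt_of_le (by positivity) h1
  have hlogn : Real.logb 2 (n : ℝ) = 2 ^ (m + n₀) := by
    rw [hn]
    push_cast
    rw [Real.logb_pow]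
    simp
  have hlogpow : Real.logb 2 ((n : ℝ) ^ α) = α * 2 ^ (m + n₀) := by
    rw [Real.logb, Real.log_rpow hNpos, mul_div_assoc, ← Real.logb, hlogn]
  have hL1 : Real.logb 2 ε₁ + α * 2 ^ (m + n₀) ≤ Real.logb 2 (T' n) := by
    have h := Real.logb_le_logb_of_le (b := 2) one_lt_two (by positivity) h1
    rwa [Real.logb_mul (ne_of_gt hε₁) (ne_of_gt hpow), hlogpow] at h
  have hL2 : Real.logb 2 (T' n) ≤ Real.logb 2 ε₂ + α * 2 ^ (m + n₀) := by
    have h := Real.logb_le_logb_of_le (b := 2) one_lt_two hTpos h2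
    rwa [Real.logb_mul (by linarith) (ne_of_gt hpow), hlogpow] at h
  set L := Real.logb 2 (T' n) with hL
  set x := (L - Real.logb 2 ε₁) / 2 ^ n₀ with hx
  have h2n₀ : (0 : ℝ) < 2 ^ n₀ := by positivity
  have hsplit : ((2 : ℝ)) ^ (m + n₀) = 2 ^ m * 2 ^ n₀ := by rw [pow_add]
  have hx1 : α * 2 ^ m ≤ x := by
    rw [hx, le_div_iff₀ h2n₀]
    nlinarith [hL1]
  have hdivlog : Real.logb 2 (ε₂ / ε₁) = Real.logb 2 ε₂ - Real.logb 2 ε₁ :=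
    Real.logb_div (by linarith) (ne_of_gt hε₁)
  have hx2 : x < α * 2 ^ m + 1 := by
    rw [hx, div_lt_iff₀ h2n₀]
    nlinarith [hL2, hn₀, hdivlog]
  have hfl1 : (p : ℝ) ≤ x := by rw [hp]; exact Int.floor_le x
  have hfl2 : x - 1 < (p : ℝ) := by rw [hp]; exact Int.sub_one_lt_floor x
  have h2m : (0 : ℝ) < 2 ^ m := by positivity
  rw [abs_sub_lt_iff]
  constructor
  · rw [div_sub' (ne_of_gt h2m), div_lt_div_iff₀ h2m h2m]
    nlinarith
  · rw [sub_div' (ne_of_gt h2m), div_lt_div_iff₀ h2m h2m]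
    nlinarith
end
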